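/- Let F be a field with char(F) = 0 or char(F) > n+1, and let K = {1,...,n+1}. Suppose multilinear functions F₁,...,F_{n+1} : Mₙ(F)ⁿ → Mₙ(F) satisfy Σ_{k=1}^{n+1} Fₖ(x₁,...,x̂ₖ,...,x_{n+1})xₖ = 0 for all xᵢ ∈ Mₙ(F), and each Fₖ is symmetric enough that its trace Tₖ(x) = Fₖ(x,...,x) is defined. Then each Tₖ satisfies Tₖ(x) = det(x)·Sₖ(x) for some constant matrix Sₖ ∈ Mₙ(F) (the trace of a 0-linear function). -/

import Mathlib

open Matrix MvPolynomial

-- ### Auxiliary lemmas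

private lemma degreeOf_mul_eq_aux {K σ : Type*} [Field K] [Fintype σ] [DecidableEq σ] (v : σ)
    (f g : MvPolynomial σ K) (hf : f ≠ 0) (hg : g ≠ 0) :
    degreeOf v (f * g) = degreeOf v f + degreeOf v g := by
  obtain ⟨m, hm⟩ : ∃ m, Fintype.card σ = m + 1 :=
    ⟨Fintype.card σ - 1, (Nat.succ_pred_eq_of_pos (@Fintype.card_pos _ _ ⟨v⟩)).symm⟩
  let e : σ ≃ Fin (m + 1) := (Fintype.equivFinOfCardEq hm).trans
    (Equiv.swap ((Fintype.equivFinOfCardEq hm) v) 0)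
  have hev : e v = 0 := Equiv.swap_apply_left _ _
  have key : ∀ p : MvPolynomial σ K, degreeOf v p =
      (finSuccEquiv K m (rename e p)).natDegree := by
    intro p
    rw [natDegree_finSuccEquiv, ← hev, degreeOf_rename_of_injective e.injective]
  have hrf : rename e f ≠ 0 := fun h => hf (by
    simpa using congrArg (rename e.symm) h)
  have hrg : rename e g ≠ 0 := fun h => hg (by
    simpa using congrArg (rename e.symm) h)
  have hf' : finSuccEquiv K m (rename e f) ≠ 0 := fun h => hrf (by
    simpa using congrArg (finSuccEquiv K m).symm h)
  have hg' : finSuccEquiv K m (rename e g) ≠ 0 := fun h => hrg (by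
    simpa using congrArg (finSuccEquiv K m).symm h)
  rw [key, key, key, _root_.map_mul, _root_.map_mul, Polynomial.natDegree_mul hf' hg']

private lemma degreeOf_detX_le {K : Type*} [Field K] {n : ℕ} (v : Fin n × Fin n) :
    degreeOf v (det (mvPolynomialX (Fin n) (Fin n) K)) ≤ 1 := by
  classical
  rw [det_apply]
  refine (degreeOf_sum_le _ _ _).trans ?_
  rw [Finset.sup_le_iff]
  intro σ _
  have h1 : (Equiv.Perm.sign σ • ∏ i, mvPolynomialX (Fin n) (Fin n) K (σ i) i)
      = C (((Equiv.Perm.sign σ : ℤ) : K)) * ∏ i, mvPolynomialX (Fin n) (Fin n) K (σ i) i := by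
    rw [Units.smul_def, zsmul_eq_mul, map_intCast (C : K →+* MvPolynomial (Fin n × Fin n) K)]
  rw [h1]
  refine (degreeOf_C_mul_le _ _ _).trans ?_
  refine (degreeOf_prod_le _ _ _).trans ?_
  have h2 : ∀ i : Fin n, degreeOf v (mvPolynomialX (Fin n) (Fin n) K (σ i) i)
      ≤ if i = v.2 then 1 else 0 := by
    intro i
    rw [mvPolynomialX_apply, degreeOf_X]
    rcases eq_or_ne v (σ i, i) with h | h
    · rw [if_pos h, h]; simp
    · rw [if_neg h]; exact Nat.zero_le _
  refine (Finset.sum_le_sum fun i _ => h2 i).trans ?_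
  simp

private lemma eq_C_of_degreeOf_eq_zero {K σ : Type*} [Field K] (q : MvPolynomial σ K)
    (h : ∀ v : σ, degreeOf v q = 0) : q = C (coeff 0 q) := by
  classical
  apply MvPolynomial.ext
  intro m
  rcases eq_or_ne m 0 with rfl | hm
  · simp
  · rw [coeff_C, if_neg (Ne.symm hm)]
    by_contra hc
    have hmem : m ∈ q.support := mem_support_iff.mpr hc
    apply hm
    ext v
    exact Nat.le_zero.mp ((h v) ▸ monomial_le_degreeOf v hmem)

private lemma squarefree_detX {K : Type*} [Field K] {n : ℕ} :
    Squarefree (det (mvPolynomialX (Fin n) (Fin n) K)) := by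
  classical
  intro q hq
  have hdet : det (mvPolynomialX (Fin n) (Fin n) K) ≠ 0 := det_mvPolynomialX_ne_zero _ _
  obtain ⟨r, hr⟩ := hq
  have hq0 : q ≠ 0 := by rintro rfl; simp at hr; exact hdet hr
  have hr0 : r ≠ 0 := by rintro rfl; simp at hr; exact hdet hr
  have hdeg : ∀ v : Fin n × Fin n, degreeOf v q = 0 := by
    intro v
    have := degreeOf_detX_le (K := K) v
    rw [hr, degreeOf_mul_eq_aux v _ _ (mul_ne_zero hq0 hq0) hr0,
      degreeOf_mul_eq_aux v _ _ hq0 hq0] at this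
    omega
  have hqC := eq_C_of_degreeOf_eq_zero q hdeg
  have hc0 : coeff 0 q ≠ 0 := by
    intro h; apply hq0; rw [hqC, h, map_zero]
  rw [hqC]
  exact IsUnit.of_mul_eq_one (C (coeff 0 q)⁻¹)
    (by rw [← _root_.map_mul, mul_inv_cancel₀ hc0, MvPolynomial.C_1])

private lemma isHomogeneous_detX {K : Type*} [Field K] {n : ℕ} :
    IsHomogeneous (det (mvPolynomialX (Fin n) (Fin n) K)) n := by
  rw [det_apply]
  apply IsHomogeneous.sum
  intro σ _
  have h1 : (Equiv.Perm.sign σ • ∏ i, mvPolynomialX (Fin n) (Fin n) K (σ i) i)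
      = C (((Equiv.Perm.sign σ : ℤ) : K)) * ∏ i, mvPolynomialX (Fin n) (Fin n) K (σ i) i := by
    rw [Units.smul_def, zsmul_eq_mul, map_intCast (C : K →+* MvPolynomial (Fin n × Fin n) K)]
  rw [h1]
  have h2 : IsHomogeneous (∏ i, mvPolynomialX (Fin n) (Fin n) K (σ i) i) n := by
    have := IsHomogeneous.prod Finset.univ
      (fun i : Fin n => mvPolynomialX (Fin n) (Fin n) K (σ i) i) (fun _ => 1)
      (fun i _ => isHomogeneous_X _ _)
    simpa using this
  exact h2.C_mul _

private lemma quotient_constant {K σ : Type*} [Field K] {d s : MvPolynomial σ K} {n : ℕ}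
    (hd : d.IsHomogeneous n) (hd0 : d ≠ 0) (hP : (d * s).IsHomogeneous n) :
    ∃ a : K, s = C a := by
  by_cases hs : s = 0
  · exact ⟨0, by simp [hs]⟩
  refine ⟨coeff 0 s, ?_⟩
  have hcomp : ∀ e : ℕ, e ≠ 0 → homogeneousComponent e s = 0 := by
    intro e he
    rcases le_or_gt e s.totalDegree with hle | hlt
    · have key : d * s = ∑ i ∈ Finset.range (s.totalDegree + 1),
          d * homogeneousComponent i s := by
        rw [← Finset.mul_sum, sum_homogeneousComponent]
      have h0 : homogeneousComponent (n + e) (d * s) = 0 := by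
        rw [homogeneousComponent_of_mem ((mem_homogeneousSubmodule _ _).mpr hP)]
        exact if_neg (by omega)
      rw [key, map_sum] at h0
      have hterm : ∀ i ∈ Finset.range (s.totalDegree + 1),
          homogeneousComponent (n + e) (d * homogeneousComponent i s)
          = if e = i then d * homogeneousComponent i s else 0 := by
        intro i _
        rw [homogeneousComponent_of_mem ((mem_homogeneousSubmodule _ _).mpr
          (hd.mul (homogeneousComponent_isHomogeneous i s)))]
        simp only [add_right_inj]
      rw [Finset.sum_congr rfl hterm, Finset.sum_ite_eq] at h0
      rw [if_pos (Finset.mem_range.mpr (by omega))] at h0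
      rcases mul_eq_zero.mp h0 with h | h
      · exact absurd h hd0
      · exact h
    · exact homogeneousComponent_eq_zero _ _ hlt
  conv_lhs => rw [← sum_homogeneousComponent s]
  rw [Finset.sum_eq_single 0 (fun i _ hi => hcomp i hi) (fun h => by simp at h),
    homogeneousComponent_zero]

private lemma matrix_repr' {K : Type*} [Semiring K] {n : ℕ} (A : Matrix (Fin n) (Fin n) K) :
    A = ∑ p : Fin n × Fin n, A p.1 p.2 • Matrix.single p.1 p.2 (1 : K) := by
  have h : ∀ p : Fin n × Fin n, A p.1 p.2 • Matrix.single p.1 p.2 (1 : K)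
      = Matrix.single p.1 p.2 (A p.1 p.2) := by
    intro p; rw [smul_single, smul_eq_mul, mul_one]
  simp_rw [h]
  rw [Fintype.sum_prod_type]
  exact matrix_eq_sum_single A

private lemma identity_K {K : Type*} [CommRing K] {n : ℕ}
    (cK : Fin (n + 1) → (Fin n → Fin n × Fin n) → Matrix (Fin n) (Fin n) K)
    (hbasis : ∀ g : Fin (n + 1) → Fin n × Fin n,
      ∑ j : Fin (n + 1), cK j (fun i => g (j.succAbove i)) *
        Matrix.single (g j).1 (g j).2 (1 : K) = 0)
    (x : Fin (n + 1) → Matrix (Fin n) (Fin n) K) :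
    ∑ j : Fin (n + 1),
      (∑ f : Fin n → Fin n × Fin n,
        (∏ i, x (j.succAbove i) (f i).1 (f i).2) • cK j f) * x j = 0 := by
  classical
  have expand : ∀ j : Fin (n + 1),
      (∑ f : Fin n → Fin n × Fin n,
        (∏ i, x (j.succAbove i) (f i).1 (f i).2) • cK j f) * x j
      = ∑ g : Fin (n + 1) → Fin n × Fin n,
          (∏ j', x j' (g j').1 (g j').2) •
            (cK j (fun i => g (j.succAbove i)) * Matrix.single (g j).1 (g j).2 (1 : K)) := by
    intro j
    conv_lhs => rw [matrix_repr' (x j)]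
    rw [Finset.sum_mul]
    have step1 : ∀ f : Fin n → Fin n × Fin n,
        ((∏ i, x (j.succAbove i) (f i).1 (f i).2) • cK j f) *
          (∑ p : Fin n × Fin n, x j p.1 p.2 • Matrix.single p.1 p.2 (1 : K))
        = ∑ p : Fin n × Fin n,
            ((∏ i, x (j.succAbove i) (f i).1 (f i).2) * x j p.1 p.2) •
              (cK j f * Matrix.single p.1 p.2 (1 : K)) := by
      intro f
      rw [Finset.mul_sum]
      refine Finset.sum_congr rfl fun p _ => ?_
      rw [smul_mul_assoc, mul_smul_comm, smul_smul]
    rw [Finset.sum_congr rfl fun f _ => step1 f]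
    rw [Finset.sum_comm]
    have pairsum : ∑ p : Fin n × Fin n, ∑ f : Fin n → Fin n × Fin n,
        ((∏ i, x (j.succAbove i) (f i).1 (f i).2) * x j p.1 p.2) •
          (cK j f * Matrix.single p.1 p.2 (1 : K))
        = ∑ q : (Fin n × Fin n) × (Fin n → Fin n × Fin n),
        ((∏ i, x (j.succAbove i) (q.2 i).1 (q.2 i).2) * x j q.1.1 q.1.2) •
          (cK j q.2 * Matrix.single q.1.1 q.1.2 (1 : K)) := by
      exact (Fintype.sum_prod_type (f := fun q : (Fin n × Fin n) × (Fin n → Fin n × Fin n) =>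
        ((∏ i, x (j.succAbove i) (q.2 i).1 (q.2 i).2) * x j q.1.1 q.1.2) •
          (cK j q.2 * Matrix.single q.1.1 q.1.2 (1 : K)))).symm
    rw [pairsum]
    refine Fintype.sum_equiv (Fin.insertNthEquiv (fun _ => Fin n × Fin n) j) _ _ ?_
    rintro ⟨p, f⟩
    have hg1 : (Fin.insertNthEquiv (fun _ => Fin n × Fin n) j) (p, f) j = p := by
      simp [Fin.insertNthEquiv]
    have hg2 : ∀ i, (Fin.insertNthEquiv (fun _ => Fin n × Fin n) j) (p, f) (j.succAbove i)
        = f i := by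
      intro i; simp [Fin.insertNthEquiv]
    have hprod : (∏ j', x j' (((Fin.insertNthEquiv (fun _ => Fin n × Fin n) j) (p, f)) j').1
          (((Fin.insertNthEquiv (fun _ => Fin n × Fin n) j) (p, f)) j').2)
        = x j p.1 p.2 * ∏ i, x (j.succAbove i) (f i).1 (f i).2 := by
      rw [Fin.prod_univ_succAbove (fun j' =>
        x j' (((Fin.insertNthEquiv (fun _ => Fin n × Fin n) j) (p, f)) j').1
          (((Fin.insertNthEquiv (fun _ => Fin n × Fin n) j) (p, f)) j').2) j, hg1]
      congr 1
      exact Finset.prod_congr rfl fun i _ => by rw [hg2 i]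
    simp only [hg1, hg2, hprod]
    rw [mul_comm]
  rw [Finset.sum_congr rfl fun j _ => expand j]
  rw [Finset.sum_comm]
  refine Finset.sum_eq_zero fun g _ => ?_
  rw [← Finset.smul_sum, hbasis g, smul_zero]

private lemma mlin_expand {F : Type*} [Field F] {n : ℕ}
    (g : MultilinearMap F (fun _ : Fin n => Matrix (Fin n) (Fin n) F)
      (Matrix (Fin n) (Fin n) F))
    (v : Fin n → Matrix (Fin n) (Fin n) F) :
    g v = ∑ f : Fin n → Fin n × Fin n,
      (∏ i, v i (f i).1 (f i).2) • g (fun i => Matrix.single (f i).1 (f i).2 (1 : F)) := by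
  classical
  have hv : v = fun i => ∑ p : Fin n × Fin n, v i p.1 p.2 • Matrix.single p.1 p.2 (1 : F) :=
    funext fun i => matrix_repr' (v i)
  conv_lhs => rw [hv]
  rw [g.map_sum (fun i (p : Fin n × Fin n) => v i p.1 p.2 • Matrix.single p.1 p.2 (1 : F))]
  exact Finset.sum_congr rfl fun f _ => g.map_smul_univ _ _

set_option maxHeartbeats 2000000 in
/-- The `m = n + 1` case of divisibility of traces by the determinant: if multilinear
`F₁,...,F_{n+1}` on `Mₙ(F)` satisfy `Σₖ Fₖ(x₁,...,x̂ₖ,...,x_{n+1})xₖ = 0`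
(`char F = 0` or `char F > n + 1`), then each trace `Tₖ(x) = Fₖ(x,...,x)` equals
`det(x) · Sₖ` for a constant matrix `Sₖ`. -/
theorem leftFI_trace_det_divides {F : Type*} [Field F] (n : ℕ) (hn : 1 ≤ n)
    (hchar : ∀ p : ℕ, CharP F p → p = 0 ∨ n + 1 < p)
    (G : Fin (n + 1) → MultilinearMap F (fun _ : Fin n => Matrix (Fin n) (Fin n) F)
      (Matrix (Fin n) (Fin n) F))
    (hFI : ∀ x : Fin (n + 1) → Matrix (Fin n) (Fin n) F,
      ∑ k : Fin (n + 1), G k (fun i => x (k.succAbove i)) * x k = 0) :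
    ∀ k : Fin (n + 1), ∃ S : Matrix (Fin n) (Fin n) F,
      ∀ x : Matrix (Fin n) (Fin n) F, G k (fun _ => x) = Matrix.det x • S := by
  classical
  intro k
  set K := AlgebraicClosure F with hK
  let φ : F →+* K := algebraMap F K
  let ψ : Matrix (Fin n) (Fin n) F →+* Matrix (Fin n) (Fin n) K := φ.mapMatrix
  have hstd : ∀ a b : Fin n,
      (Matrix.single a b (1 : F)).map φ = Matrix.single a b (1 : K) := by
    intro a b
    ext i j
    simp [Matrix.single, Matrix.map_apply, apply_ite φ]
  let cK : Fin (n + 1) → (Fin n → Fin n × Fin n) → Matrix (Fin n) (Fin n) K :=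
    fun j f => (G j (fun i => Matrix.single (f i).1 (f i).2 (1 : F))).map φ
  have hbasis : ∀ g : Fin (n + 1) → Fin n × Fin n,
      ∑ j : Fin (n + 1), cK j (fun i => g (j.succAbove i)) *
        Matrix.single (g j).1 (g j).2 (1 : K) = 0 := by
    intro g
    have h0 := congrArg ψ (hFI (fun j => Matrix.single (g j).1 (g j).2 (1 : F)))
    rw [map_sum, map_zero] at h0
    rw [← h0]
    refine Finset.sum_congr rfl fun j _ => ?_
    rw [_root_.map_mul]
    congr 1
    exact (hstd _ _).symm
  have hFIK := identity_K cK hbasis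
  -- vanishing of the trace on singular matrices over K
  have hvan : ∀ y : Matrix (Fin n) (Fin n) K, det y = 0 →
      (∑ f : Fin n → Fin n × Fin n, (∏ i, y (f i).1 (f i).2) • cK k f) = 0 := by
    intro y hdet
    obtain ⟨w, hw0, hww⟩ := Matrix.exists_mulVec_eq_zero_iff.mpr hdet
    set T := ∑ f : Fin n → Fin n × Fin n, (∏ i, y (f i).1 (f i).2) • cK k f with hT
    have key : ∀ z : Matrix (Fin n) (Fin n) K, T * z =
        -((∑ j ∈ Finset.univ.erase k, (∑ f : Fin n → Fin n × Fin n,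
          (∏ i, (if j.succAbove i = k then z else y) (f i).1 (f i).2) • cK j f)) * y) := by
      intro z
      have h1 := hFIK (fun j' => if j' = k then z else y)
      rw [← Finset.add_sum_erase _ _ (Finset.mem_univ k)] at h1
      have hk : (∑ f : Fin n → Fin n × Fin n,
          (∏ i, (if k.succAbove i = k then z else y) (f i).1 (f i).2) • cK k f) *
            (if k = k then z else y) = T * z := by
        rw [if_pos rfl, hT]
        refine congrArg (· * z) ?_
        refine Finset.sum_congr rfl fun f _ => ?_
        congr 1
        exact Finset.prod_congr rfl fun i _ => by rw [if_neg (Fin.succAbove_ne k i)]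
      have hrest : ∑ j ∈ Finset.univ.erase k, (∑ f : Fin n → Fin n × Fin n,
            (∏ i, (if j.succAbove i = k then z else y) (f i).1 (f i).2) • cK j f) *
            (if j = k then z else y)
          = (∑ j ∈ Finset.univ.erase k, (∑ f : Fin n → Fin n × Fin n,
            (∏ i, (if j.succAbove i = k then z else y) (f i).1 (f i).2) • cK j f)) * y := by
        rw [Finset.sum_mul]
        refine Finset.sum_congr rfl fun j hj => ?_
        rw [if_neg (Finset.ne_of_mem_erase hj)]
      rw [hk, hrest] at h1
      exact eq_neg_of_add_eq_zero_left h1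
    have hu : ∀ u : Fin n → K, T *ᵥ u = 0 := by
      intro u
      obtain ⟨i0, hi0⟩ : ∃ i0, w i0 ≠ 0 := by
        by_contra h; push_neg at h; exact hw0 (funext h)
      set z : Matrix (Fin n) (Fin n) K := Matrix.of fun i j' => if j' = i0 then u i / w i0 else 0
        with hz
      have hzw : z *ᵥ w = u := by
        ext i
        simp only [Matrix.mulVec, dotProduct, hz, Matrix.of_apply, ite_mul, zero_mul]
        rw [Finset.sum_ite_eq' Finset.univ i0 (fun j' => u i / w i0 * w j')]
        rw [if_pos (Finset.mem_univ i0), div_mul_cancel₀ _ hi0]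
      calc T *ᵥ u = T *ᵥ (z *ᵥ w) := by rw [hzw]
        _ = (T * z) *ᵥ w := mulVec_mulVec w T z
        _ = 0 := by
            rw [key z, Matrix.neg_mulVec, ← mulVec_mulVec, hww, Matrix.mulVec_zero, neg_zero]
    ext i j
    have h2 := congrFun (hu (Pi.single j 1)) i
    simpa using h2
  -- entrywise polynomial argument over K
  have entry : ∀ i j : Fin n, ∃ a : K, ∀ y : Matrix (Fin n) (Fin n) K,
      (∑ f : Fin n → Fin n × Fin n, (∏ i', y (f i').1 (f i').2) • cK k f) i j = det y * a := by
    intro i j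
    set p : MvPolynomial (Fin n × Fin n) K :=
      ∑ f : Fin n → Fin n × Fin n, (∏ i', X (f i')) * C (cK k f i j) with hp
    have heval : ∀ y : Matrix (Fin n) (Fin n) K,
        eval (fun v : Fin n × Fin n => y v.1 v.2) p
        = (∑ f : Fin n → Fin n × Fin n, (∏ i', y (f i').1 (f i').2) • cK k f) i j := by
      intro y
      rw [hp, map_sum, Matrix.sum_apply]
      refine Finset.sum_congr rfl fun f _ => ?_
      rw [_root_.map_mul, map_prod, eval_C, Matrix.smul_apply, smul_eq_mul]
      congr 1
      exact Finset.prod_congr rfl fun i' _ => by rw [eval_X]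
    set D := det (mvPolynomialX (Fin n) (Fin n) K) with hD
    have hDval : ∀ y : Matrix (Fin n) (Fin n) K,
        eval (fun v : Fin n × Fin n => y v.1 v.2) D = det y := by
      intro y
      rw [hD, RingHom.map_det, mvPolynomialX_mapMatrix_eval]
    have hdvd : D ∣ p := by
      have hpmem : p ∈ vanishingIdeal K (zeroLocus K (Ideal.span {D}) : Set (Fin n × Fin n → K)) := by
        intro z hzmem
        have hz0 : eval z D = 0 := hzmem D (Ideal.subset_span rfl)
        set y : Matrix (Fin n) (Fin n) K := Matrix.of fun a b => z (a, b) with hy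
        have hzy : (fun v : Fin n × Fin n => y v.1 v.2) = z := funext fun v => by simp [hy]
        have hydet : det y = 0 := by rw [← hDval y, hzy]; exact hz0
        have := heval y
        rw [hzy] at this
        show eval z p = 0
        rw [this, hvan y hydet]
        simp
      rw [vanishingIdeal_zeroLocus_eq_radical] at hpmem
      obtain ⟨m, hm⟩ := hpmem
      have hDp : D ∣ p ^ m := Ideal.mem_span_singleton.mp hm
      rcases Nat.eq_zero_or_pos m with rfl | hmpos
      · exact (isUnit_of_dvd_one (by simpa using hDp)).dvd
      · exact (squarefree_detX.dvd_pow_iff_dvd hmpos.ne').mp hDp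
    obtain ⟨s, hs⟩ := hdvd
    have hphom : p.IsHomogeneous n := by
      rw [hp]
      apply IsHomogeneous.sum
      intro f _
      have h2 : IsHomogeneous (∏ i', (X (f i') : MvPolynomial (Fin n × Fin n) K)) n := by
        have := IsHomogeneous.prod Finset.univ
          (fun i' : Fin n => (X (f i') : MvPolynomial (Fin n × Fin n) K)) (fun _ => 1)
          (fun i' _ => isHomogeneous_X _ _)
        simpa using this
      simpa using h2.mul (isHomogeneous_C _ _)
    obtain ⟨a, ha⟩ := quotient_constant isHomogeneous_detX
      (det_mvPolynomialX_ne_zero _ _) (hs ▸ hphom)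
    refine ⟨a, fun y => ?_⟩
    rw [← heval y, hs, ha, _root_.map_mul, eval_C, hDval y]
  choose a ha using entry
  -- compatibility of the trace over F with the trace over K
  have hcompat : ∀ x : Matrix (Fin n) (Fin n) F, ∀ i j : Fin n,
      φ (G k (fun _ => x) i j)
      = (∑ f : Fin n → Fin n × Fin n, (∏ i', (x.map φ) (f i').1 (f i').2) • cK k f) i j := by
    intro x i j
    rw [mlin_expand (G k)]
    simp only [Matrix.sum_apply, Matrix.smul_apply, smul_eq_mul, map_sum, _root_.map_mul,
      map_prod, Matrix.map_apply, cK]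
  refine ⟨G k (fun _ => (1 : Matrix (Fin n) (Fin n) F)), fun x => ?_⟩
  have hone : (1 : Matrix (Fin n) (Fin n) F).map φ = (1 : Matrix (Fin n) (Fin n) K) :=
    Matrix.map_one φ (map_zero φ) (map_one φ)
  ext i j
  apply φ.injective
  rw [hcompat x i j, ha i j (x.map φ)]
  have h1 : a i j = φ (G k (fun _ => (1 : Matrix (Fin n) (Fin n) F)) i j) := by
    have := ha i j (1 : Matrix (Fin n) (Fin n) K)
    rw [det_one, one_mul] at this
    rw [hcompat (1 : Matrix (Fin n) (Fin n) F) i j, hone, this]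
  rw [h1, Matrix.smul_apply, smul_eq_mul, _root_.map_mul, RingHom.map_det, RingHom.mapMatrix_apply]
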